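/- arXiv:1109.5343 — 4 statements merged into one kernel-verified Lean document; each statement's English description precedes it below -/
import Mathlib

section
/- Let f(z) be a function holomorphic on a neighborhood of the closed unit disk in the Riemann sphere except for a simple pole at z=0 (i.e. z·f(z) is holomorphic on the closed disk). If the restriction of f to the unit circle is nonvanishing, then the winding number of the curve t ↦ f(e^{2πit}) around 0 equals −1 if and only if f has no zeros in the punctured closed unit disk and the residue of f at 0 is nonzero. -/
open Metric Complex Filter Set Topology

lemma aux_not_ev_zero {g : ℂ → ℂ} {r : ℝ} (hr : 1 < r)
    (hg : DifferentiableOn ℂ g (ball (0:ℂ) r))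
    (hne : ∀ z : ℂ, ‖z‖ = 1 → g z ≠ 0) {a : ℂ} (ha : a ∈ ball (0:ℂ) r) :
    ¬ (∀ᶠ z in nhds a, g z = 0) := by
  intro h
  have hA : AnalyticOnNhd ℂ g (ball (0:ℂ) r) :=
    hg.analyticOnNhd isOpen_ball
  have h1 : (1:ℂ) ∈ ball (0:ℂ) r := by
    simp [mem_ball, dist_eq_norm, hr]
  have := hA.eqOn_zero_of_preconnected_of_eventuallyEq_zero
    (convex_ball _ _).isPreconnected ha (by simpa [EventuallyEq] using h) h1
  exact hne 1 (by simp) this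

lemma aux_finite {g : ℂ → ℂ} {r : ℝ} (hr : 1 < r)
    (hg : DifferentiableOn ℂ g (ball (0:ℂ) r))
    (hne : ∀ z : ℂ, ‖z‖ = 1 → g z ≠ 0) :
    {z ∈ closedBall (0:ℂ) 1 | g z = 0}.Finite := by
  have hA : AnalyticOnNhd ℂ g (ball (0:ℂ) r) := hg.analyticOnNhd isOpen_ball
  set Z := {z ∈ closedBall (0:ℂ) 1 | g z = 0} with hZ
  have hsub : closedBall (0:ℂ) 1 ⊆ ball (0:ℂ) r := closedBall_subset_ball hr
  have hcl : IsClosed Z := by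
    have : Z = closedBall (0:ℂ) 1 ∩ g ⁻¹' {0} := by
      ext z; simp [hZ, Set.mem_sep_iff]
    rw [this]
    exact ContinuousOn.preimage_isClosed_of_isClosed
      ((hg.continuousOn).mono hsub) isClosed_closedBall isClosed_singleton
  have hcomp : IsCompact Z :=
    (isCompact_closedBall (0:ℂ) 1).of_isClosed_subset hcl (fun z hz => hz.1)
  refine hcomp.finite ?_
  rw [isDiscrete_iff_discreteTopology, discreteTopology_subtype_iff]
  intro x hx
  have hx' : x ∈ ball (0:ℂ) r := hsub hx.1
  have hev : ∀ᶠ z in 𝓝[≠] x, g z ≠ 0 :=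
    (hA x hx').eventually_eq_zero_or_eventually_ne_zero.resolve_left
      (aux_not_ev_zero hr hg hne hx')
  rw [← Filter.empty_mem_iff_bot]
  rw [Filter.mem_inf_principal]
  filter_upwards [hev] with z hz hzZ
  exact hz hzZ.2

lemma aux_key {r : ℝ} (hr : 1 < r) :
    ∀ n : ℕ, ∀ g : ℂ → ℂ, DifferentiableOn ℂ g (ball (0:ℂ) r) →
      (∀ z : ℂ, ‖z‖ = 1 → g z ≠ 0) →
      {z ∈ closedBall (0:ℂ) 1 | g z = 0}.ncard = n →
      ∃ m : ℕ, (∮ z in C(0, 1), deriv g z / g z) = 2 * Real.pi * Complex.I * m ∧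
        (m = 0 ↔ ∀ z ∈ closedBall (0:ℂ) 1, g z ≠ 0) := by
  intro n
  induction n using Nat.strong_induction_on with
  | _ n IH =>
  intro g hg hne hcard
  have hA : AnalyticOnNhd ℂ g (ball (0:ℂ) r) := hg.analyticOnNhd isOpen_ball
  have hsub : closedBall (0:ℂ) 1 ⊆ ball (0:ℂ) r := closedBall_subset_ball hr
  have hfin : {z ∈ closedBall (0:ℂ) 1 | g z = 0}.Finite := aux_finite hr hg hne
  by_cases hZ : {z ∈ closedBall (0:ℂ) 1 | g z = 0} = ∅
  · -- no zeros: integral is 0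
    have hnz : ∀ z ∈ closedBall (0:ℂ) 1, g z ≠ 0 := by
      intro z hz hz0
      rw [Set.eq_empty_iff_forall_notMem] at hZ
      exact hZ z ⟨hz, hz0⟩
    refine ⟨0, ?_, by simpa using hnz⟩
    have hdiff : ∀ z ∈ closedBall (0:ℂ) 1, DifferentiableAt ℂ (fun w => deriv g w / g w) z := by
      intro z hz
      have hz' : z ∈ ball (0:ℂ) r := hsub hz
      exact ((hA.deriv z hz').differentiableAt).div ((hA z hz').differentiableAt) (hnz z hz)
    rw [circleIntegral_eq_zero_of_differentiable_on_off_countable zero_le_one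
      Set.countable_empty
      (fun z hz => (hdiff z hz).continuousAt.continuousWithinAt)
      (fun z hz => hdiff z (ball_subset_closedBall hz.1))]
    simp
  · -- there is a zero a
    obtain ⟨a, haZ⟩ := Set.nonempty_iff_ne_empty.2 hZ
    have ha1 : a ∈ closedBall (0:ℂ) 1 := haZ.1
    have hga : g a = 0 := haZ.2
    have haball : a ∈ ball (0:ℂ) 1 := by
      rcases lt_or_eq_of_le (mem_closedBall.1 ha1) with h | h
      · exact mem_ball.2 h
      · exact absurd hga (hne a (by simpa [dist_eq_norm] using h))
    have har : a ∈ ball (0:ℂ) r := hsub ha1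
    have haA : AnalyticAt ℂ g a := hA a har
    have hnev : ¬ (∀ᶠ z in nhds a, g z = 0) := aux_not_ev_zero hr hg hne har
    have hord : analyticOrderAt g a ≠ ⊤ := fun h => hnev (analyticOrderAt_eq_top.1 h)
    obtain ⟨k, hk⟩ : ∃ k : ℕ, analyticOrderAt g a = k := by
      lift analyticOrderAt g a to ℕ using hord with k
      exact ⟨k, rfl⟩
    obtain ⟨h, hhA, hha, hhev⟩ := (haA.analyticOrderAt_eq_natCast).1 hk
    have hk1 : 1 ≤ k := by
      rcases Nat.eq_zero_or_pos k with rfl | h'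
      · exfalso; have := hhev.self_of_nhds; simp [hga] at this
        exact hha this.symm
      · exact h'
    set H : ℂ → ℂ := Function.update (fun z => g z / (z - a) ^ k) a (h a) with hHdef
    have hHne : ∀ z : ℂ, z ≠ a → H z = g z / (z - a) ^ k := fun z hz =>
      Function.update_of_ne hz _ _
    have hfac : ∀ z, g z = (z - a) ^ k * H z := by
      intro z
      rcases eq_or_ne z a with rfl | hz
      · simp [hga, sub_self, zero_pow (by omega : k ≠ 0)]
      · rw [hHne z hz, mul_div_cancel₀]
        exact pow_ne_zero _ (sub_ne_zero.2 hz)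
    have hHa : H =ᶠ[nhds a] h := by
      filter_upwards [hhev] with z hz
      rcases eq_or_ne z a with rfl | hzz
      · simp [hHdef]
      · rw [hHne z hzz, hz, smul_eq_mul]
        field_simp [pow_ne_zero _ (sub_ne_zero.2 hzz)]
    have hHdiff : DifferentiableOn ℂ H (ball (0:ℂ) r) := by
      intro z hz
      rcases eq_or_ne z a with rfl | hzz
      · exact (hhA.differentiableAt.congr_of_eventuallyEq hHa).differentiableWithinAt
      · have hopen : IsOpen (ball (0:ℂ) r ∩ {w | w ≠ a}) :=
          isOpen_ball.inter (isOpen_compl_singleton)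
        have : DifferentiableAt ℂ H z := by
          have hev : (fun w => g w / (w - a) ^ k) =ᶠ[nhds z] H := by
            filter_upwards [hopen.mem_nhds ⟨hz, hzz⟩] with w hw
            exact (hHne w hw.2).symm
          refine DifferentiableAt.congr_of_eventuallyEq ?_ hev.symm
          exact ((hA z hz).differentiableAt).div
            (DifferentiableAt.pow (by fun_prop) k)
            (pow_ne_zero _ (sub_ne_zero.2 hzz))
        exact this.differentiableWithinAt
    have hHcirc : ∀ z : ℂ, ‖z‖ = 1 → H z ≠ 0 := by
      intro z hz
      have hza : z ≠ a := by
        intro hcon; rw [hcon] at hz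
        exact (mem_ball.1 haball).ne (by simpa [dist_eq_norm] using hz)
      rw [hHne z hza]
      exact div_ne_zero (hne z hz) (pow_ne_zero _ (sub_ne_zero.2 hza))
    have hHzero : {z ∈ closedBall (0:ℂ) 1 | H z = 0}
        = {z ∈ closedBall (0:ℂ) 1 | g z = 0} \ {a} := by
      ext z
      simp only [Set.mem_sep_iff, Set.mem_diff, Set.mem_singleton_iff]
      constructor
      · rintro ⟨hz1, hz2⟩
        have hza : z ≠ a := by
          intro hcon; rw [hcon] at hz2
          exact hha (hHa.self_of_nhds ▸ hz2)
        rw [hHne z hza] at hz2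
        exact ⟨⟨hz1, by
          have := div_eq_zero_iff.1 hz2
          rcases this with h' | h'
          · exact h'
          · exact absurd h' (pow_ne_zero _ (sub_ne_zero.2 hza))⟩, hza⟩
      · rintro ⟨⟨hz1, hz2⟩, hza⟩
        exact ⟨hz1, by rw [hHne z hza, hz2, zero_div]⟩
    have hcard' : {z ∈ closedBall (0:ℂ) 1 | H z = 0}.ncard = n - 1 := by
      rw [hHzero, Set.ncard_sdiff_singleton_of_mem haZ, hcard]
    have hnpos : 0 < n := hcard ▸ ((Set.ncard_pos hfin).2 ⟨a, haZ⟩)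
    obtain ⟨m', hm'int, hm'iff⟩ := IH (n - 1) (by omega) H hHdiff hHcirc hcard'
    obtain ⟨j, rfl⟩ : ∃ j, k = j + 1 := ⟨k - 1, by omega⟩
    have hHA : AnalyticOnNhd ℂ H (ball (0:ℂ) r) := hHdiff.analyticOnNhd isOpen_ball
    have hEq : Set.EqOn (fun z => deriv g z / g z)
        (fun z => ((j:ℂ) + 1) * (z - a)⁻¹ + deriv H z / H z) (sphere (0:ℂ) 1) := by
      intro z hz
      have hz1 : ‖z‖ = 1 := by simpa [mem_sphere_iff_norm] using hz
      have hzr : z ∈ ball (0:ℂ) r := by simp [mem_ball, dist_eq_norm, hz1, hr]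
      have hza : z ≠ a := by
        intro hcon; rw [hcon] at hz1
        exact (mem_ball.1 haball).ne (by simpa [dist_eq_norm] using hz1)
      have hza' : z - a ≠ 0 := sub_ne_zero.2 hza
      have hgz : g z ≠ 0 := hne z hz1
      have hHz : H z ≠ 0 := hHcirc z hz1
      have hHder : DifferentiableAt ℂ H z := (hHA z hzr).differentiableAt
      have hgfun : g = fun w => (w - a) ^ (j + 1) * H w := funext hfac
      have hd1 : HasDerivAt (fun w : ℂ => (w - a) ^ (j + 1))
          ((j + 1 : ℕ) * (z - a) ^ j * 1) z := by
        simpa using (((hasDerivAt_id z).sub_const a).fun_pow (j + 1))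
      have hderiv : deriv g z
          = ((j : ℂ) + 1) * (z - a) ^ j * H z + (z - a) ^ (j + 1) * deriv H z := by
        rw [hgfun]
        rw [deriv_fun_mul (hd1.differentiableAt) hHder, hd1.deriv]
        push_cast
        ring
      show deriv g z / g z = ((j:ℂ) + 1) * (z - a)⁻¹ + deriv H z / H z
      rw [hderiv, hgfun]
      field_simp
      ring
    have hint1 : CircleIntegrable (fun z => ((j:ℂ) + 1) * (z - a)⁻¹) 0 1 := by
      refine ContinuousOn.circleIntegrable zero_le_one ?_
      refine continuousOn_const.mul (ContinuousOn.inv₀ (by fun_prop) ?_)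
      intro z hz
      have hz1 : ‖z‖ = 1 := by simpa [mem_sphere_iff_norm] using hz
      refine sub_ne_zero.2 ?_
      intro hcon; rw [hcon] at hz1
      exact (mem_ball.1 haball).ne (by simpa [dist_eq_norm] using hz1)
    have hint2 : CircleIntegrable (fun z => deriv H z / H z) 0 1 := by
      refine ContinuousOn.circleIntegrable zero_le_one ?_
      intro z hz
      have hz1 : ‖z‖ = 1 := by simpa [mem_sphere_iff_norm] using hz
      have hzr : z ∈ ball (0:ℂ) r := by simp [mem_ball, dist_eq_norm, hz1, hr]
      exact (((hHA.deriv z hzr).differentiableAt.continuousAt).div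
        ((hHA z hzr).differentiableAt.continuousAt) (hHcirc z hz1)).continuousWithinAt
    refine ⟨(j + 1) + m', ?_, ?_⟩
    · have hadd : (∮ z in C(0, 1), (((j:ℂ) + 1) * (z - a)⁻¹ + deriv H z / H z))
          = (∮ z in C(0, 1), ((j:ℂ) + 1) * (z - a)⁻¹) + (∮ z in C(0, 1), deriv H z / H z) := by
        simp only [circleIntegral, smul_add]
        exact intervalIntegral.integral_add hint1.out hint2.out
      rw [circleIntegral.integral_congr zero_le_one hEq, hadd,
        circleIntegral.integral_const_mul,
        circleIntegral.integral_sub_inv_of_mem_ball haball, hm'int]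
      push_cast
      ring
    · exact iff_of_false (by omega) (fun hall => hall a ha1 hga)

/-- Winding number (= logarithmic residue) of a function `f` holomorphic near the closed
unit disk except for a simple pole at `0` (i.e. `f z = g z / z` with `g` holomorphic),
nonvanishing on the unit circle, equals `-1` iff `f` has no zeros in the punctured closed
disk and the residue `g 0` of `f` at `0` is nonzero. -/
theorem winding_number_neg_one_iff
    (f g : ℂ → ℂ) (U : Set ℂ) (hU : IsOpen U)
    (hsub : closedBall (0 : ℂ) 1 ⊆ U)
    (hg : DifferentiableOn ℂ g U)
    (hfg : ∀ z ∈ U, z ≠ 0 → f z = g z / z)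
    (hne : ∀ z : ℂ, ‖z‖ = 1 → f z ≠ 0) :
    (2 * Real.pi * Complex.I)⁻¹ * (∮ z in C(0, 1), deriv f z / f z) = -1 ↔
      ((∀ z ∈ closedBall (0 : ℂ) 1, z ≠ 0 → f z ≠ 0) ∧ g 0 ≠ 0) := by
  obtain ⟨δ, hδ, hδsub⟩ :=
    (isCompact_closedBall (0:ℂ) 1).exists_cthickening_subset_open hU hsub
  set r : ℝ := δ + 1 with hrdef
  have hr : 1 < r := by simp [hrdef]; linarith
  have hballU : ball (0:ℂ) r ⊆ U := by
    refine subset_trans (ball_subset_closedBall.trans ?_) hδsub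
    rw [cthickening_closedBall (le_of_lt hδ) zero_le_one]
  have hg' : DifferentiableOn ℂ g (ball (0:ℂ) r) := hg.mono hballU
  have hgA : AnalyticOnNhd ℂ g (ball (0:ℂ) r) := hg'.analyticOnNhd isOpen_ball
  have hgne : ∀ z : ℂ, ‖z‖ = 1 → g z ≠ 0 := by
    intro z hz hg0
    have hz0 : z ≠ 0 := by intro h; rw [h] at hz; simp at hz
    have hzU : z ∈ U := hsub (by simp [mem_closedBall, dist_eq_norm, hz])
    exact hne z hz (by rw [hfg z hzU hz0, hg0, zero_div])
  obtain ⟨m, hint, hiff⟩ :=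
    aux_key hr _ g hg' hgne rfl
  have hEqf : Set.EqOn (fun z => deriv f z / f z)
      (fun z => deriv g z / g z - z⁻¹) (sphere (0:ℂ) 1) := by
    intro z hz
    have hz1 : ‖z‖ = 1 := by simpa [mem_sphere_iff_norm] using hz
    have hz0 : z ≠ 0 := by intro h; rw [h] at hz1; simp at hz1
    have hzU : z ∈ U := hsub (by simp [mem_closedBall, dist_eq_norm, hz1])
    have hgz : g z ≠ 0 := hgne z hz1
    have hopen : IsOpen (U ∩ {w : ℂ | w ≠ 0}) := hU.inter isOpen_compl_singleton
    have hev : f =ᶠ[nhds z] (fun w => g w / w) := by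
      filter_upwards [hopen.mem_nhds ⟨hzU, hz0⟩] with w hw
      exact hfg w hw.1 hw.2
    have hgd : DifferentiableAt ℂ g z :=
      ((hg.analyticOnNhd hU) z hzU).differentiableAt
    have hdq : HasDerivAt (fun w => g w / w)
        ((deriv g z * z - g z * 1) / z ^ 2) z :=
      hgd.hasDerivAt.div (hasDerivAt_id z) hz0
    have hderivf : deriv f z = (deriv g z * z - g z * 1) / z ^ 2 := by
      rw [hev.deriv_eq, hdq.deriv]
    show deriv f z / f z = deriv g z / g z - z⁻¹
    rw [hderivf, hfg z hzU hz0]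
    field_simp
  have hint1 : CircleIntegrable (fun z => deriv g z / g z) 0 1 := by
    refine ContinuousOn.circleIntegrable zero_le_one ?_
    intro z hz
    have hz1 : ‖z‖ = 1 := by simpa [mem_sphere_iff_norm] using hz
    have hzr : z ∈ ball (0:ℂ) r := by simp [mem_ball, dist_eq_norm, hz1, hr]
    exact (((hgA.deriv z hzr).differentiableAt.continuousAt).div
      ((hgA z hzr).differentiableAt.continuousAt) (hgne z hz1)).continuousWithinAt
  have hint2 : CircleIntegrable (fun z : ℂ => z⁻¹) 0 1 := by
    refine ContinuousOn.circleIntegrable zero_le_one ?_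
    refine ContinuousOn.inv₀ (by fun_prop) ?_
    intro z hz
    have hz1 : ‖z‖ = 1 := by simpa [mem_sphere_iff_norm] using hz
    intro h; rw [h] at hz1; simp at hz1
  have hzero : (∮ z in C(0, 1), z⁻¹) = 2 * Real.pi * Complex.I := by
    have := circleIntegral.integral_sub_inv_of_mem_ball
      (show (0:ℂ) ∈ ball (0:ℂ) 1 by simp)
    simpa using this
  have hintf : (∮ z in C(0, 1), deriv f z / f z)
      = 2 * Real.pi * Complex.I * m - 2 * Real.pi * Complex.I := by
    rw [circleIntegral.integral_congr zero_le_one hEqf,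
      circleIntegral.integral_sub hint1 hint2, hint, hzero]
  have hc : (2 * (Real.pi:ℂ) * Complex.I) ≠ 0 := by
    simp [Real.pi_ne_zero, Complex.I_ne_zero]
  have hLHS : (2 * Real.pi * Complex.I)⁻¹ * (∮ z in C(0, 1), deriv f z / f z)
      = (m : ℂ) - 1 := by
    rw [hintf]
    field_simp
  rw [hLHS]
  have h1 : ((m:ℂ) - 1 = -1) ↔ m = 0 := by
    constructor
    · intro h
      have : (m:ℂ) = 0 := by linear_combination h
      exact_mod_cast this
    · rintro rfl; simp
  rw [h1, hiff]
  constructor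
  · intro hall
    refine ⟨fun z hz hz0 => ?_, hall 0 (mem_closedBall_self zero_le_one)⟩
    rw [hfg z (hsub hz) hz0]
    exact div_ne_zero (hall z hz) hz0
  · rintro ⟨h1', h2'⟩ z hz
    rcases eq_or_ne z 0 with rfl | hz0
    · exact h2'
    · intro hg0
      exact h1' z hz hz0 (by rw [hfg z (hsub hz) hz0, hg0, zero_div])
end

section
/- Let λ, λ̄ be functions of variables (z,x) and let Q = Q(λ, λ̄), Q̃ = Q̃(λ, λ̄) be smooth functions of λ and λ̄. Suppose λ and λ̄ evolve under two time variables t and t̃ by ∂λ/∂t̃ = {−Q̃₋, λ}, ∂λ̄/∂t̃ = {Q̃₊, λ̄} and ∂λ/∂t = {−Q₋, λ}, ∂λ̄/∂t = {Q₊, λ̄}, where Q = Q₊ + Q₋ is any decomposition into two parts and similarly for Q̃. Then the Zakharov–Shabat equation holds: ∂Q/∂t̃ − ∂Q̃/∂t + {Q₊, Q̃₊} − {Q₋, Q̃₋} = 0. -/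
/-- the space of variables `(z, x, t, t̃)` -/
abbrev E4 : Type := ℂ × ℂ × ℂ × ℂ

noncomputable def pdZ (f : E4 → ℂ) (p : E4) : ℂ := (fderiv ℂ f p) (1, 0, 0, 0)
noncomputable def pdX (f : E4 → ℂ) (p : E4) : ℂ := (fderiv ℂ f p) (0, 1, 0, 0)
noncomputable def pdT (f : E4 → ℂ) (p : E4) : ℂ := (fderiv ℂ f p) (0, 0, 1, 0)
noncomputable def pdS (f : E4 → ℂ) (p : E4) : ℂ := (fderiv ℂ f p) (0, 0, 0, 1)

/-- the bracket `{f,g} = z f_z g_x - z g_z f_x` -/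
noncomputable def br4 (f g : E4 → ℂ) (p : E4) : ℂ :=
  p.1 * pdZ f p * pdX g p - p.1 * pdZ g p * pdX f p

lemma fderiv_comp2 (q : ℂ × ℂ → ℂ) (f g : E4 → ℂ)
    (hq : ContDiff ℂ ⊤ q) (hf : ContDiff ℂ ⊤ f) (hg : ContDiff ℂ ⊤ g)
    (p : E4) (v : E4) :
    fderiv ℂ (fun x => q (f x, g x)) p v
      = fderiv ℂ f p v * fderiv ℂ q (f p, g p) (1, 0)
        + fderiv ℂ g p v * fderiv ℂ q (f p, g p) (0, 1) := by
  have hfd : DifferentiableAt ℂ f p := hf.differentiable (by simp) p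
  have hgd : DifferentiableAt ℂ g p := hg.differentiable (by simp) p
  have hpair : DifferentiableAt ℂ (fun x => (f x, g x)) p := DifferentiableAt.prodMk hfd hgd
  have hqd : DifferentiableAt ℂ q (f p, g p) := hq.differentiable (by simp) _
  have h := fderiv_comp p hqd hpair
  rw [show (fun x => q (f x, g x)) = q ∘ (fun x => (f x, g x)) from rfl, h]
  rw [DifferentiableAt.fderiv_prodMk hfd hgd]
  simp only [ContinuousLinearMap.comp_apply, ContinuousLinearMap.prod_apply]
  have hv : (fderiv ℂ f p v, fderiv ℂ g p v)
      = (fderiv ℂ f p v) • ((1 : ℂ), (0 : ℂ)) + (fderiv ℂ g p v) • ((0 : ℂ), (1 : ℂ)) := by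
    simp
  rw [hv, map_add, map_smul, map_smul, smul_eq_mul, smul_eq_mul]

/-- The Zakharov–Shabat equation: if `λ, λ̄` evolve in the times `t, t̃` via the Lax
equations with generators `Q = Q₊ + Q₋` and `Q̃ = Q̃₊ + Q̃₋` (arbitrary decompositions),
then `∂Q/∂t̃ − ∂Q̃/∂t + {Q₊, Q̃₊} − {Q₋, Q̃₋} = 0`. -/
theorem zakharov_shabat
    (lam lamb Qp Qm Qtp Qtm : E4 → ℂ) (q qt : ℂ × ℂ → ℂ)
    (hlam : ContDiff ℂ ⊤ lam) (hlamb : ContDiff ℂ ⊤ lamb)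
    (hQp : ContDiff ℂ ⊤ Qp) (hQm : ContDiff ℂ ⊤ Qm)
    (hQtp : ContDiff ℂ ⊤ Qtp) (hQtm : ContDiff ℂ ⊤ Qtm)
    (hq : ContDiff ℂ ⊤ q) (hqt : ContDiff ℂ ⊤ qt)
    (hdec : ∀ p, Qp p + Qm p = q (lam p, lamb p))
    (hdect : ∀ p, Qtp p + Qtm p = qt (lam p, lamb p))
    (ht1 : ∀ p, pdT lam p = br4 (fun x => -(Qm x)) lam p)
    (ht2 : ∀ p, pdT lamb p = br4 Qp lamb p)
    (hs1 : ∀ p, pdS lam p = br4 (fun x => -(Qtm x)) lam p)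
    (hs2 : ∀ p, pdS lamb p = br4 Qtp lamb p) :
    ∀ p, pdS (fun x => q (lam x, lamb x)) p - pdT (fun x => qt (lam x, lamb x)) p
        + br4 Qp Qtp p - br4 Qm Qtm p = 0 := by
  intro p
  set qL := fderiv ℂ q (lam p, lamb p) (1, 0) with hqL
  set qLb := fderiv ℂ q (lam p, lamb p) (0, 1) with hqLb
  set tL := fderiv ℂ qt (lam p, lamb p) (1, 0) with htL
  set tLb := fderiv ℂ qt (lam p, lamb p) (0, 1) with htLb
  have hneg : ∀ (f : E4 → ℂ) (v : E4),
      fderiv ℂ (fun x => -(f x)) p v = -(fderiv ℂ f p v) := by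
    intro f v; rw [fderiv_fun_neg]; simp
  have hsum : ∀ v : E4, fderiv ℂ Qp p v + fderiv ℂ Qm p v
      = fderiv ℂ lam p v * qL + fderiv ℂ lamb p v * qLb := by
    intro v
    have he : (fun x => Qp x + Qm x) = fun x => q (lam x, lamb x) :=
      funext fun x => hdec x
    have hadd : fderiv ℂ (fun x => Qp x + Qm x) p
        = fderiv ℂ Qp p + fderiv ℂ Qm p :=
      fderiv_fun_add (hQp.differentiable (by simp) p) (hQm.differentiable (by simp) p)
    have := fderiv_comp2 q lam lamb hq hlam hlamb p v
    rw [← he, hadd] at this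
    simpa using this
  have hsumt : ∀ v : E4, fderiv ℂ Qtp p v + fderiv ℂ Qtm p v
      = fderiv ℂ lam p v * tL + fderiv ℂ lamb p v * tLb := by
    intro v
    have he : (fun x => Qtp x + Qtm x) = fun x => qt (lam x, lamb x) :=
      funext fun x => hdect x
    have hadd : fderiv ℂ (fun x => Qtp x + Qtm x) p
        = fderiv ℂ Qtp p + fderiv ℂ Qtm p :=
      fderiv_fun_add (hQtp.differentiable (by simp) p) (hQtm.differentiable (by simp) p)
    have := fderiv_comp2 qt lam lamb hqt hlam hlamb p v
    rw [← he, hadd] at this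
    simpa using this
  have hS := fderiv_comp2 q lam lamb hq hlam hlamb p (0, 0, 0, 1)
  have hT := fderiv_comp2 qt lam lamb hqt hlam hlamb p (0, 0, 1, 0)
  have e1 := ht1 p; have e2 := ht2 p; have e3 := hs1 p; have e4 := hs2 p
  simp only [pdT, pdS, pdZ, pdX, br4, hneg] at e1 e2 e3 e4 ⊢
  rw [hS, hT, e1, e2, e3, e4]
  have c1 := hsum (1, 0, 0, 0)
  have c2 := hsum (0, 1, 0, 0)
  have c3 := hsumt (1, 0, 0, 0)
  have c4 := hsumt (0, 1, 0, 0)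
  have d1 : fderiv ℂ Qm p (1, 0, 0, 0)
      = fderiv ℂ lam p (1, 0, 0, 0) * qL + fderiv ℂ lamb p (1, 0, 0, 0) * qLb
        - fderiv ℂ Qp p (1, 0, 0, 0) := by linear_combination c1
  have d2 : fderiv ℂ Qm p (0, 1, 0, 0)
      = fderiv ℂ lam p (0, 1, 0, 0) * qL + fderiv ℂ lamb p (0, 1, 0, 0) * qLb
        - fderiv ℂ Qp p (0, 1, 0, 0) := by linear_combination c2
  have d3 : fderiv ℂ Qtm p (1, 0, 0, 0)
      = fderiv ℂ lam p (1, 0, 0, 0) * tL + fderiv ℂ lamb p (1, 0, 0, 0) * tLb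
        - fderiv ℂ Qtp p (1, 0, 0, 0) := by linear_combination c3
  have d4 : fderiv ℂ Qtm p (0, 1, 0, 0)
      = fderiv ℂ lam p (0, 1, 0, 0) * tL + fderiv ℂ lamb p (0, 1, 0, 0) * tLb
        - fderiv ℂ Qtp p (0, 1, 0, 0) := by linear_combination c4
  rw [d1, d2, d3, d4]
  ring
end

section
/- Define Q_{v,p}(λ,λ̄) = −((−λ)^p/p!)(log(1+λ̄/λ) + c_p − 1) + (λ̄^p/p!)(log(λ̄(λ+λ̄)) − c_p − 1) and Q_{u,p}(λ,λ̄) = λ̄^{p+1}/(p+1)!, where c_p is the p-th harmonic number. Then for p ≥ 1, (λ ∂/∂λ + λ̄ ∂/∂λ̄) Q_{v,p} = p·Q_{v,p} + 2·Q_{u,p−1}. -/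
set_option maxHeartbeats 1000000


/-- the `p`-th harmonic number `c_p = 1 + 1/2 + ⋯ + 1/p` -/
noncomputable def harm (p : ℕ) : ℂ := ∑ k ∈ Finset.range p, (1 : ℂ) / (k + 1)

/-- `Q_{v,p} = −((−λ)^p/p!)(log(1+λ̄/λ)+c_p−1) + (λ̄^p/p!)(log(λ̄(λ+λ̄))−c_p−1)` -/
noncomputable def Qv (p : ℕ) (x y : ℂ) : ℂ :=
  -((-x) ^ p / (Nat.factorial p : ℂ)) * (Complex.log (1 + y / x) + harm p - 1)
    + (y ^ p / (Nat.factorial p : ℂ)) * (Complex.log (y * (x + y)) - harm p - 1)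

/-- `Q_{u,p} = λ̄^{p+1}/(p+1)!` -/
noncomputable def Qu (p : ℕ) (x y : ℂ) : ℂ := y ^ (p + 1) / (Nat.factorial (p + 1) : ℂ)

/-- The quasi-homogeneity identity
`(λ ∂/∂λ + λ̄ ∂/∂λ̄) Q_{v,p} = p Q_{v,p} + 2 Q_{u,p−1}` for `p ≥ 1`. -/
theorem euler_identity_Qv (p : ℕ) (hp : 1 ≤ p) (l lb : ℂ)
    (hl : l ≠ 0) (hlb : lb ≠ 0) (hsum : l + lb ≠ 0)
    (hslit1 : 1 + lb / l ∈ Complex.slitPlane)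
    (hslit2 : lb * (l + lb) ∈ Complex.slitPlane) :
    l * deriv (fun t => Qv p t lb) l + lb * deriv (fun t => Qv p l t) lb
      = (p : ℂ) * Qv p l lb + 2 * Qu (p - 1) l lb := by
  obtain ⟨q, rfl⟩ : ∃ q, p = q + 1 := ⟨p - 1, (Nat.succ_pred_eq_of_pos hp).symm⟩
  set c := harm (q + 1) with hc
  set F := ((Nat.factorial (q + 1) : ℂ)) with hF
  have hFne : F ≠ 0 := Nat.cast_ne_zero.mpr (Nat.factorial_ne_zero _)
  have h1ne : (1 : ℂ) + lb / l ≠ 0 := Complex.slitPlane_ne_zero hslit1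
  have h2ne : lb * (l + lb) ≠ 0 := mul_ne_zero hlb hsum
  have L1 := Complex.log (1 + lb / l)
  -- derivative in the first variable
  have gpow : HasDerivAt (fun t : ℂ => (-t) ^ (q + 1))
      (((q : ℂ) + 1) * (-l) ^ q * (-1)) l := by
    have := (hasDerivAt_pow (q + 1) (-l)).comp l (hasDerivAt_neg l)
    simpa [Function.comp_def] using this
  have gL1 : HasDerivAt (fun t : ℂ => Complex.log (1 + lb / t))
      ((1 + lb / l)⁻¹ * (lb * (-(l ^ 2)⁻¹))) l := by
    have hin : HasDerivAt (fun t : ℂ => 1 + lb / t) (lb * (-(l ^ 2)⁻¹)) l := by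
      simpa [div_eq_mul_inv] using (((hasDerivAt_inv hl).const_mul lb).const_add 1)
    have := (Complex.hasDerivAt_log hslit1).comp l hin
    simpa [mul_comm, Function.comp_def] using this
  have gL2 : HasDerivAt (fun t : ℂ => Complex.log (lb * (t + lb)))
      ((lb * (l + lb))⁻¹ * lb) l := by
    have hin : HasDerivAt (fun t : ℂ => lb * (t + lb)) lb l := by
      simpa using ((hasDerivAt_id l).add_const lb).const_mul lb
    have := (Complex.hasDerivAt_log hslit2).comp l hin
    simpa [mul_comm, Function.comp_def] using this
  have d1 : HasDerivAt (fun t => Qv (q + 1) t lb)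
      (-( (((q : ℂ) + 1) * (-l) ^ q * (-1)) / F) * (Complex.log (1 + lb / l) + c - 1)
        + -((-l) ^ (q + 1) / F) * ((1 + lb / l)⁻¹ * (lb * (-(l ^ 2)⁻¹)))
        + lb ^ (q + 1) / F * ((lb * (l + lb))⁻¹ * lb)) l := by
    have hA := ((gpow.div_const F).neg.mul ((gL1.add_const c).sub_const 1))
    have hB := ((gL2.sub_const c).sub_const 1).const_mul (lb ^ (q + 1) / F)
    have := hA.add hB
    simp only [Qv, ← hc, ← hF]
    exact this
  -- derivative in the second variable
  have gL1' : HasDerivAt (fun s : ℂ => Complex.log (1 + s / l))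
      ((1 + lb / l)⁻¹ * l⁻¹) lb := by
    have hin : HasDerivAt (fun s : ℂ => 1 + s / l) l⁻¹ lb := by
      simpa [div_eq_mul_inv] using (((hasDerivAt_id lb).mul_const l⁻¹).const_add 1)
    have := (Complex.hasDerivAt_log hslit1).comp lb hin
    simpa [mul_comm, Function.comp_def] using this
  have gL2' : HasDerivAt (fun s : ℂ => Complex.log (s * (l + s)))
      ((lb * (l + lb))⁻¹ * (l + 2 * lb)) lb := by
    have hin : HasDerivAt (fun s : ℂ => s * (l + s)) (l + 2 * lb) lb := by
      have := ((hasDerivAt_id lb).mul ((hasDerivAt_id lb).const_add l))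
      simp only [id] at this
      convert this using 1
      · rfl
      · rfl
      · rfl
      ring
    have := (Complex.hasDerivAt_log hslit2).comp lb hin
    simpa [mul_comm, Function.comp_def] using this
  have gpow' : HasDerivAt (fun s : ℂ => s ^ (q + 1)) (((q : ℂ) + 1) * lb ^ q) lb := by
    simpa using hasDerivAt_pow (q + 1) lb
  have d2 : HasDerivAt (fun s => Qv (q + 1) l s)
      (-((-l) ^ (q + 1) / F) * ((1 + lb / l)⁻¹ * l⁻¹)
        + ((((q : ℂ) + 1) * lb ^ q) / F * (Complex.log (lb * (l + lb)) - c - 1)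
          + lb ^ (q + 1) / F * ((lb * (l + lb))⁻¹ * (l + 2 * lb)))) lb := by
    have hA := (gL1'.add_const c).sub_const 1 |>.const_mul (-((-l) ^ (q + 1) / F))
    have hB := (gpow'.div_const F).mul ((gL2'.sub_const c).sub_const 1)
    have := hA.add hB
    simp only [Qv, ← hc, ← hF]
    exact this
  rw [d1.deriv, d2.deriv]
  simp only [Qv, Qu, Nat.add_sub_cancel, ← hc, ← hF]
  have key1 : lb * -(l ^ 2)⁻¹ * l + l⁻¹ * lb = 0 := by
    field_simp; ring
  have key2 : (lb * (l + lb))⁻¹ * (lb * l + (l + 2 * lb) * lb) = 2 := by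
    rw [inv_mul_eq_div, div_eq_iff h2ne]; ring
  push_cast
  linear_combination (-((-l) ^ (q + 1) / F) * (1 + lb / l)⁻¹) * key1
    + (lb ^ (q + 1) / F) * key2
end

section
/- Define F_{−1}(x,x̄) = −e^{−x}(log((x+x̄)/x) + Ein(−x) − 1) − e^{(x̄−x)/2}, where Ein(z) = −Σ_{n≥1}(−z)^n/(n!n). Then F_{−1;x̄} − F_{−1;x} − F_{−1} = −1/x on the domain where x ≠ 0, x+x̄ ≠ 0 and the log branch is defined. -/
open Complex

/-- the entire exponential integral `Ein(z) = −Σ_{n≥1} (−z)^n/(n!·n)` -/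
noncomputable def Ein (z : ℂ) : ℂ :=
  -∑' n : ℕ, (-z) ^ (n + 1) / ((Nat.factorial (n + 1) : ℂ) * ((n : ℂ) + 1))

-- exp z = ∑' z^n/n!
lemma cexp_eq_tsum (z : ℂ) : Complex.exp z = ∑' n : ℕ, z ^ n / (Nat.factorial n : ℂ) := by
  rw [Complex.exp_eq_exp_ℂ, NormedSpace.exp_eq_tsum_div]

lemma summable_aux (z : ℂ) : Summable (fun n : ℕ => z ^ n / ((Nat.factorial (n+1)) : ℂ)) := by
  apply Summable.of_norm
  have h := Real.summable_pow_div_factorial ‖z‖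
  apply h.of_nonneg_of_le (fun n => norm_nonneg _)
  intro n
  rw [norm_div, norm_pow, Complex.norm_natCast]
  apply div_le_div_of_nonneg_left (by positivity) (by positivity)
  exact_mod_cast Nat.factorial_le (Nat.le_succ n)

lemma tsum_shift_exp (z : ℂ) :
    ∑' n : ℕ, z ^ (n+1) / ((Nat.factorial (n+1)) : ℂ) = Complex.exp z - 1 := by
  have hs : Summable (fun n : ℕ => z ^ n / (Nat.factorial n : ℂ)) := by
    apply Summable.of_norm
    have h := Real.summable_pow_div_factorial ‖z‖
    apply h.of_nonneg_of_le (fun n => norm_nonneg _) (fun n => le_of_eq ?_)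
    rw [norm_div, norm_pow, Complex.norm_natCast]
  rw [cexp_eq_tsum, hs.tsum_eq_zero_add]
  simp

lemma tsum_deriv_eval (z : ℂ) (hz : z ≠ 0) :
    ∑' n : ℕ, z ^ n / ((Nat.factorial (n+1)) : ℂ) = (Complex.exp z - 1) / z := by
  have h := tsum_shift_exp z
  have hm : z * ∑' n : ℕ, z ^ n / ((Nat.factorial (n+1)) : ℂ)
      = ∑' n : ℕ, z ^ (n+1) / ((Nat.factorial (n+1)) : ℂ) := by
    rw [← tsum_mul_left]
    congr 1; ext n; rw [pow_succ]; ring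
  field_simp [← h, ← hm]
  rw [mul_comm, hm, h]

lemma hasDerivAt_Ein (z : ℂ) (hz : z ≠ 0) :
    HasDerivAt Ein ((1 - Complex.exp (-z)) / z) z := by
  set g : ℕ → ℂ → ℂ := fun n t => (-t) ^ (n + 1) / ((Nat.factorial (n + 1) : ℂ) * ((n : ℂ) + 1))
  set g' : ℕ → ℂ → ℂ := fun n t => -((-t) ^ n / ((Nat.factorial (n + 1) : ℂ)))
  have key : HasDerivAt (fun t => ∑' n, g n t) (∑' n, g' n z) z := by
    apply hasDerivAt_tsum_of_isPreconnected
      (u := fun n : ℕ => (‖z‖ + 1) ^ n / (Nat.factorial (n+1) : ℝ))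
      ?_ (Metric.isOpen_ball (x := (0:ℂ)) (ε := ‖z‖ + 1)) ((convex_ball (0:ℂ) (‖z‖+1)).isPreconnected)
      ?_ ?_ (y₀ := 0) ?_ ?_ ?_
    · have h := Real.summable_pow_div_factorial (‖z‖ + 1)
      apply h.of_nonneg_of_le (fun n => by positivity)
      intro n
      apply div_le_div_of_nonneg_left (by positivity) (by positivity)
      exact_mod_cast Nat.factorial_le (Nat.le_succ n)
    · intro n y _
      have h1 : HasDerivAt (fun t : ℂ => (-t) ^ (n+1))
          (((n:ℂ)+1) * (-y) ^ n * (-1)) y := by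
        have := (hasDerivAt_pow (n+1) (-y)).comp y (hasDerivAt_neg y)
        simpa [Function.comp_def] using this
      have h2 := h1.div_const ((Nat.factorial (n + 1) : ℂ) * ((n : ℂ) + 1))
      refine h2.congr_deriv ?_
      have hn : ((n:ℂ) + 1) ≠ 0 := Nat.cast_add_one_ne_zero n
      have hf : ((Nat.factorial (n+1) : ℂ)) ≠ 0 :=
        Nat.cast_ne_zero.2 (Nat.factorial_ne_zero _)
      simp only [g']
      field_simp
    · intro n y hy
      simp only [g', norm_neg, norm_div, norm_pow, norm_neg, Complex.norm_natCast]
      gcongr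
      exact le_of_lt (by simpa using hy)
    · simp [Metric.mem_ball]; positivity
    · apply summable_of_ne_finset_zero (s := ∅)
      intro n _
      simp [g]
    · simp [Metric.mem_ball]
  have hEin : HasDerivAt Ein (-∑' n, g' n z) z := key.neg
  have : ∑' n, g' n z = -((Complex.exp (-z) - 1) / (-z)) := by
    rw [tsum_neg, tsum_deriv_eval (-z) (neg_ne_zero.2 hz)]
  rw [this, neg_neg, div_neg, ← neg_div, neg_sub] at hEin
  exact hEin

/-- `F_{−1}(x,x̄) = −e^{−x}(log((x+x̄)/x) + Ein(−x) − 1) − e^{(x̄−x)/2}` -/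
noncomputable def Fm1 (x xb : ℂ) : ℂ :=
  -Complex.exp (-x) * (Complex.log ((x + xb) / x) + Ein (-x) - 1)
    - Complex.exp ((xb - x) / 2)

/-- The deformed flatness identity `F_{−1;x̄} − F_{−1;x} − F_{−1} = −1/x`
on the domain where `x ≠ 0`, `x + x̄ ≠ 0` and the log branch is defined. -/
theorem flatness_identity_Fm1 (x xb : ℂ) (hx : x ≠ 0) (hsum : x + xb ≠ 0)
    (hslit : (x + xb) / x ∈ Complex.slitPlane) :
    deriv (fun y => Fm1 x y) xb - deriv (fun t => Fm1 t xb) x - Fm1 x xb = -1 / x := by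
  have hq : (x + xb) / x ≠ 0 := div_ne_zero hsum hx
  -- derivative in xb
  have hL1 : HasDerivAt (fun y : ℂ => (x + y) / x) (1 / x) xb := by
    simpa using ((hasDerivAt_id xb).const_add x).div_const x
  have hlog1 : HasDerivAt (fun y : ℂ => Complex.log ((x + y) / x))
      ((1 / x) / ((x + xb) / x)) xb :=
    hL1.clog hslit
  have hexp1 : HasDerivAt (fun y : ℂ => Complex.exp ((y - x) / 2))
      (Complex.exp ((xb - x) / 2) * (1 / 2)) xb := by
    exact (((hasDerivAt_id xb).sub_const x).div_const 2).cexp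
  have hD1 : HasDerivAt (fun y => Fm1 x y)
      (-Complex.exp (-x) * ((1 / x) / ((x + xb) / x))
        - Complex.exp ((xb - x) / 2) * (1 / 2)) xb := by
    unfold Fm1
    exact ((((hlog1.add_const (Ein (-x))).sub_const 1).const_mul
      (-Complex.exp (-x))).sub hexp1)
  -- derivative in x
  have hA : HasDerivAt (fun t : ℂ => -Complex.exp (-t)) (Complex.exp (-x)) x := by
    have := ((hasDerivAt_neg x).cexp).neg
    exact this.congr_deriv (by ring)
  have hL2 : HasDerivAt (fun t : ℂ => (t + xb) / t)
      ((1 * x - (x + xb) * 1) / x ^ 2) x :=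
    ((hasDerivAt_id x).add_const xb).div (hasDerivAt_id x) hx
  have hlog2 : HasDerivAt (fun t : ℂ => Complex.log ((t + xb) / t))
      (((1 * x - (x + xb) * 1) / x ^ 2) / ((x + xb) / x)) x :=
    hL2.clog hslit
  have hEin2 : HasDerivAt (fun t : ℂ => Ein (-t))
      ((1 - Complex.exp x) / (-x) * (-1)) x := by
    have := (hasDerivAt_Ein (-x) (neg_ne_zero.2 hx)).comp x (hasDerivAt_neg x)
    simpa [Function.comp_def] using this
  have hexp2 : HasDerivAt (fun t : ℂ => Complex.exp ((xb - t) / 2))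
      (Complex.exp ((xb - x) / 2) * ((0 - 1) / 2)) x := by
    exact (((hasDerivAt_const x xb).sub (hasDerivAt_id x)).div_const 2).cexp
  have hG : HasDerivAt (fun t : ℂ => Complex.log ((t + xb) / t) + Ein (-t) - 1)
      (((1 * x - (x + xb) * 1) / x ^ 2) / ((x + xb) / x)
        + (1 - Complex.exp x) / (-x) * (-1)) x :=
    (hlog2.add hEin2).sub_const 1
  have hD2 : HasDerivAt (fun t => Fm1 t xb)
      (Complex.exp (-x) * (Complex.log ((x + xb) / x) + Ein (-x) - 1)
        + (-Complex.exp (-x)) * (((1 * x - (x + xb) * 1) / x ^ 2) / ((x + xb) / x)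
          + (1 - Complex.exp x) / (-x) * (-1))
        - Complex.exp ((xb - x) / 2) * ((0 - 1) / 2)) x := by
    unfold Fm1
    exact (hA.mul hG).sub hexp2
  have e1 : deriv (fun y => Fm1 x y) xb
      = -Complex.exp (-x) / (x + xb) - Complex.exp ((xb - x) / 2) / 2 := by
    rw [hD1.deriv]
    field_simp
  have e2 : deriv (fun t => Fm1 t xb) x
      = Complex.exp (-x) * (Complex.log ((x + xb) / x) + Ein (-x) - 1)
        + Complex.exp (-x) * (xb / (x * (x + xb)) - (1 - Complex.exp x) / x)
        + Complex.exp ((xb - x) / 2) / 2 := by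
    rw [hD2.deriv]
    have hc1 : (1 * x - (x + xb) * 1) / x ^ 2 / ((x + xb) / x) = -(xb / (x * (x + xb))) := by
      rw [div_div_div_eq, ← neg_div,
        div_eq_div_iff (mul_ne_zero (pow_ne_zero 2 hx) hsum) (mul_ne_zero hx hsum)]
      ring
    have hc2 : (1 - Complex.exp x) / (-x) * (-1) = (1 - Complex.exp x) / x := by
      rw [div_neg]; ring
    rw [hc1, hc2]
    ring
  have key : -Complex.exp (-x) / (x + xb)
      - Complex.exp (-x) * (xb / (x * (x + xb)) - (1 - Complex.exp x) / x) = -1 / x := by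
    have hE : Complex.exp (-x) * Complex.exp x = 1 := by
      rw [← Complex.exp_add]; simp
    have h1 : xb / (x * (x + xb)) = 1 / x - 1 / (x + xb) := by
      field_simp
      ring
    rw [h1]
    linear_combination (-1 / x) * hE
  rw [e1, e2]
  unfold Fm1
  linear_combination key
end
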